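/- Let g satisfy 0 ≤ g(p) < 1, g(p) ≤ C/p for all primes p, and ∑_{p ≤ y} g(p) = log log y + e + O((log y)^{-10}). Then the product H = ∏_p (1 - g(p))(1 - 1/p)^{-1} over all primes converges to a positive real number. -/

import Mathlib

open Finset Real ArithmeticFunction Filter

noncomputable def Tlog (n : ℕ) : ℝ := ∑ m ∈ Finset.Icc 1 n, Real.log m

lemma log_succ_le (n : ℕ) (hn : 1 ≤ n) :
    (n:ℝ) * (Real.log (n+1) - Real.log n) ≤ 1 := by
  have h1 : (0:ℝ) < n := by exact_mod_cast hn
  have key : Real.log (n+1) - Real.log n ≤ 1 / n := by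
    rw [← Real.log_div (by positivity) (by positivity)]
    calc Real.log (((n:ℝ)+1)/n) ≤ ((n:ℝ)+1)/n - 1 :=
          Real.log_le_sub_one_of_pos (by positivity)
    _ = 1/n := by field_simp; ring
  have := mul_le_mul_of_nonneg_left key h1.le
  rwa [mul_one_div, div_self h1.ne'] at this

lemma one_le_log_succ (n : ℕ) (hn : 1 ≤ n) :
    1 ≤ ((n:ℝ)+1) * (Real.log (n+1) - Real.log n) := by
  have h1 : (0:ℝ) < n := by exact_mod_cast hn
  have key : 1 / ((n:ℝ)+1) ≤ Real.log (n+1) - Real.log n := by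
    rw [← Real.log_div (by positivity) (by positivity)]
    have h2 := Real.log_le_sub_one_of_pos (x := (n:ℝ)/(n+1)) (by positivity)
    have h3 : Real.log ((n:ℝ)/(n+1)) = - Real.log (((n:ℝ)+1)/n) := by
      rw [← Real.log_inv]; congr 1; field_simp
    rw [h3] at h2
    have h4 : -(((n:ℝ))/(n+1) - 1) ≤ Real.log (((n:ℝ)+1)/n) := by linarith
    calc 1/((n:ℝ)+1) = -(((n:ℝ))/(n+1) - 1) := by field_simp; ring
    _ ≤ _ := h4
  have := mul_le_mul_of_nonneg_left key (by positivity : (0:ℝ) ≤ (n:ℝ)+1)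
  rwa [mul_one_div, div_self (by positivity : ((n:ℝ)+1) ≠ 0)] at this

lemma Tlog_bounds (n : ℕ) (hn : 1 ≤ n) :
    n * Real.log n - n + 1 ≤ Tlog n ∧ Tlog n ≤ n * Real.log n - n + 1 + Real.log n := by
  induction n with
  | zero => omega
  | succ m ih =>
    rcases Nat.eq_or_lt_of_le hn with h | h
    · simp [Tlog, ← h]
    · have hm : 1 ≤ m := by omega
      obtain ⟨l, u⟩ := ih hm
      have hT : Tlog (m+1) = Tlog m + Real.log (m+1) := by
        rw [Tlog, Tlog, Finset.sum_Icc_succ_top (by omega)]; push_cast; ring_nf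
      have e1 := log_succ_le m hm
      have e2 := one_le_log_succ m hm
      constructor
      · push_cast; nlinarith
      · push_cast; nlinarith

lemma Tlog_eq (n : ℕ) :
    Tlog n = ∑ d ∈ Finset.Icc 1 n, Λ d * ((n / d : ℕ) : ℝ) := by
  have h1 : Tlog n = ∑ m ∈ Finset.Icc 1 n, ∑ d ∈ m.divisors, Λ d := by
    refine Finset.sum_congr rfl fun m hm => ?_
    rw [ArithmeticFunction.vonMangoldt_sum]
  have h2 : ∀ d : ℕ, Λ d * ((n / d : ℕ) : ℝ) =
      ∑ m ∈ (Finset.Icc 1 n).filter (d ∣ ·), Λ d := by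
    intro d
    rw [Finset.sum_const, nsmul_eq_mul, mul_comm]
    congr 2
    rw [show Finset.Icc 1 n = Finset.Ioc 0 n from by rfl]
    exact (Nat.Ioc_filter_dvd_card_eq_div n d).symm
  rw [h1]
  simp_rw [h2]
  rw [Finset.sum_sigma' (Finset.Icc 1 n) (fun m => m.divisors) (fun _ d => Λ d),
    Finset.sum_sigma' (Finset.Icc 1 n) (fun d => (Finset.Icc 1 n).filter (d ∣ ·)) (fun d _ => Λ d)]
  apply Finset.sum_nbij' (i := fun x => ⟨x.2, x.1⟩) (j := fun x => ⟨x.2, x.1⟩) <;>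
    simp only [Finset.mem_sigma, Nat.mem_divisors, Finset.mem_filter, Finset.mem_Icc]
  · rintro ⟨m, d⟩ ⟨⟨h1m, hmn⟩, hdm, hm0⟩
    have hd0 : d ≠ 0 := fun h => hm0 (by simpa [h, zero_dvd_iff] using hdm)
    exact ⟨⟨Nat.one_le_iff_ne_zero.mpr hd0,
      le_trans (Nat.le_of_dvd (by omega) hdm) hmn⟩, ⟨h1m, hmn⟩, hdm⟩
  · rintro ⟨d, m⟩ ⟨⟨h1d, hdn⟩, ⟨h1m, hmn⟩, hdm⟩
    exact ⟨⟨h1m, hmn⟩, hdm, by omega⟩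
  · intros; trivial
  · intros; trivial
  · intros; trivial

noncomputable def psi (n : ℕ) : ℝ := ∑ d ∈ Finset.Icc 1 n, Λ d
noncomputable def MA (n : ℕ) : ℝ := ∑ d ∈ Finset.Icc 1 n, Λ d / d


lemma psi_sub_le (n : ℕ) : psi n - psi (n/2) ≤ Tlog n - 2 * Tlog (n/2) := by
  set m := n / 2 with hm
  have hmn : m ≤ n := Nat.div_le_self n 2
  have hext : Tlog m = ∑ d ∈ Finset.Icc 1 n, Λ d * ((m / d : ℕ) : ℝ) := by
    rw [Tlog_eq m]
    refine Finset.sum_subset (Finset.Icc_subset_Icc le_rfl hmn) (fun d hd hnd => ?_)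
    simp only [Finset.mem_Icc] at hd hnd
    have : m < d := by omega
    rw [Nat.div_eq_of_lt this]; simp
  have hsplit : psi n - psi m = ∑ d ∈ Finset.Ioc m n, Λ d := by
    have : psi m + ∑ d ∈ Finset.Ioc m n, Λ d = psi n := by
      rw [psi, psi, show Finset.Icc 1 n = Finset.Ioc 0 n from rfl,
        show Finset.Icc 1 m = Finset.Ioc 0 m from rfl]
      exact Finset.sum_Ioc_consecutive _ (Nat.zero_le m) hmn
    linarith
  rw [hsplit, Tlog_eq n, hext, Finset.mul_sum, ← Finset.sum_sub_distrib]
  have key : ∀ d ∈ Finset.Icc 1 n, (0:ℝ) ≤ Λ d * ((n / d : ℕ) : ℝ) - 2 * (Λ d * ((m / d : ℕ) : ℝ)) := by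
    intro d hd
    have h2 : 2 * (m / d) ≤ n / d := by
      have h3 : m / d = n / d / 2 := by
        rw [hm, Nat.div_div_eq_div_mul, Nat.div_div_eq_div_mul, Nat.mul_comm]
      rw [h3]; omega
    have : (2:ℝ) * ((m / d : ℕ) : ℝ) ≤ ((n / d : ℕ) : ℝ) := by exact_mod_cast h2
    nlinarith [vonMangoldt_nonneg (n := d)]
  calc ∑ d ∈ Finset.Ioc m n, Λ d
      ≤ ∑ d ∈ Finset.Ioc m n, (Λ d * ((n / d : ℕ) : ℝ) - 2 * (Λ d * ((m / d : ℕ) : ℝ))) := by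
        refine Finset.sum_le_sum (fun d hd => ?_)
        simp only [Finset.mem_Ioc] at hd
        have h1 : m / d = 0 := Nat.div_eq_of_lt hd.1
        have h2 : 1 ≤ n / d := (Nat.one_le_div_iff (by omega)).mpr hd.2
        have h2' : (1:ℝ) ≤ ((n / d : ℕ) : ℝ) := by exact_mod_cast h2
        rw [h1]
        simp only [Nat.cast_zero, mul_zero, sub_zero]
        nlinarith [vonMangoldt_nonneg (n := d)]
    _ ≤ ∑ d ∈ Finset.Icc 1 n, (Λ d * ((n / d : ℕ) : ℝ) - 2 * (Λ d * ((m / d : ℕ) : ℝ))) := by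
        refine Finset.sum_le_sum_of_subset_of_nonneg ?_ (fun d hd _ => key d hd)
        intro d hd
        simp only [Finset.mem_Ioc] at hd
        simp only [Finset.mem_Icc]
        omega

lemma psi_sub_le' (n : ℕ) (hn : 4 ≤ n) : psi n - psi (n/2) ≤ 4 * n := by
  have h := psi_sub_le n
  set m := n / 2 with hm
  have hm2 : 2 ≤ m := by omega
  have hmR : ((2:ℝ)) * m ≥ (n:ℝ) - 1 := by
    have h3 : n ≤ 2*m + 1 := by omega
    have := (Nat.cast_le (α := ℝ)).mpr h3
    push_cast at this; linarith
  have hmn : (2:ℝ) * m ≤ (n:ℝ) := by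
    have h3 : 2*m ≤ n := by omega
    exact_mod_cast h3
  obtain ⟨_, f1⟩ := Tlog_bounds n (by omega)
  obtain ⟨f2, _⟩ := Tlog_bounds m (by omega)
  set x := Real.log n with hx
  set y := Real.log m with hy
  set z := Real.log (n-1 : ℕ) with hz
  have hn1R : (3:ℝ) ≤ ((n-1 : ℕ):ℝ) := by
    have : (3:ℕ) ≤ n - 1 := by omega
    exact_mod_cast this
  have hyz : z - Real.log 2 ≤ y := by
    rw [hz, hy, ← Real.log_div (by positivity) (by norm_num)]
    apply Real.log_le_log (by positivity)
    rw [div_le_iff₀ (by norm_num)]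
    have : ((n-1:ℕ):ℝ) = (n:ℝ) - 1 := by
      have : (1:ℕ) ≤ n := by omega
      push_cast [this]; ring
    rw [this]; linarith
  have hz2 : Real.log 2 ≤ z := Real.log_le_log (by norm_num) (by linarith)
  have hnR : (4:ℝ) ≤ n := by exact_mod_cast hn
  have hne : (n:ℝ) - 1 ≠ 0 := by linarith
  have hxz : ((n:ℝ) - 1) * (x - z) ≤ 1 := by
    have hcast : ((n-1:ℕ):ℝ) = (n:ℝ) - 1 := by
      have h5 : (1:ℕ) ≤ n := by omega
      push_cast [h5]; ring
    have h6 : x - z ≤ 1 / ((n:ℝ)-1) := by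
      rw [hx, hz, hcast, ← Real.log_div (by positivity) hne]
      have h7 : Real.log ((n:ℝ)/((n:ℝ)-1)) ≤ (n:ℝ)/((n:ℝ)-1) - 1 :=
        Real.log_le_sub_one_of_pos (div_pos (by linarith) (by linarith))
      have h8 : (n:ℝ)/((n:ℝ)-1) - 1 = 1/((n:ℝ)-1) := by field_simp; ring
      linarith
    have h4 := mul_le_mul_of_nonneg_left h6 (by linarith : (0:ℝ) ≤ (n:ℝ)-1)
    rwa [mul_one_div, div_self hne] at h4
  have hlog2 : Real.log 2 ≤ 1 := by
    have := Real.log_le_sub_one_of_pos (x := 2) (by norm_num)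
    linarith
  have hxn : x ≤ (n:ℝ) - 1 := Real.log_le_sub_one_of_pos (by positivity)
  have B1 : 2*(m:ℝ)*(z - Real.log 2) ≤ 2*(m:ℝ)*y :=
    mul_le_mul_of_nonneg_left hyz (by positivity)
  have B2 : ((n:ℝ)-1)*(z - Real.log 2) ≤ 2*(m:ℝ)*(z - Real.log 2) :=
    mul_le_mul_of_nonneg_right (by linarith) (by linarith)
  have A1 : ((n:ℝ)-1)*(z - Real.log 2) ≤ 2*(m:ℝ)*y := le_trans B2 B1
  have A2 : (n:ℝ)*x - ((n:ℝ)-1)*z ≤ x + 1 := by nlinarith [hxz]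
  have A3 : ((n:ℝ)-1)*Real.log 2 ≤ (n:ℝ)-1 := by nlinarith [hlog2]
  nlinarith [A1, A2, A3]

lemma psi_le (n : ℕ) : psi n ≤ 8 * n := by
  induction n using Nat.strong_induction_on with
  | _ n ih =>
    rcases lt_or_ge n 4 with h | h
    · have : psi n ≤ ∑ d ∈ Finset.Icc 1 n, Real.log n := by
        refine Finset.sum_le_sum (fun d hd => ?_)
        simp only [Finset.mem_Icc] at hd
        exact le_trans vonMangoldt_le_log (Real.log_le_log (by exact_mod_cast hd.1) (by exact_mod_cast hd.2))
      rw [Finset.sum_const, Nat.card_Icc, Nat.add_sub_cancel, nsmul_eq_mul] at this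
      rcases Nat.eq_zero_or_pos n with h0 | h0
      · simp [psi, h0]
      have hlogn : Real.log n ≤ (n:ℝ) - 1 := Real.log_le_sub_one_of_pos (by exact_mod_cast h0)
      have hn4 : (n:ℝ) ≤ 4 := by exact_mod_cast le_of_lt h
      nlinarith [Real.log_natCast_nonneg n, (by exact_mod_cast h0 : (1:ℝ) ≤ (n:ℝ))]
    · have h1 := psi_sub_le' n h
      have h2 := ih (n/2) (by omega)
      have h3 : ((n/2 : ℕ):ℝ) ≤ (n:ℝ)/2 := Nat.cast_div_le
      linarith

lemma mertens1 (n : ℕ) (hn : 1 ≤ n) : |MA n - Real.log n| ≤ 9 := by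
  have key : Tlog n ≤ (n:ℝ) * MA n ∧ (n:ℝ) * MA n ≤ Tlog n + psi n := by
    rw [Tlog_eq, MA, psi, Finset.mul_sum, ← Finset.sum_add_distrib]
    constructor <;> refine Finset.sum_le_sum (fun d hd => ?_) <;>
      simp only [Finset.mem_Icc] at hd
    · have hdpos : (0:ℝ) < d := by exact_mod_cast hd.1
      have hle : ((n/d : ℕ):ℝ) ≤ (n:ℝ)/d := Nat.cast_div_le
      have : (n:ℝ) * (Λ d / d) = Λ d * ((n:ℝ)/d) := by ring
      rw [this]
      nlinarith [vonMangoldt_nonneg (n := d)]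
    · have hdpos : (0:ℝ) < d := by exact_mod_cast hd.1
      have h4 : (n:ℝ) < (d:ℝ) * ((n/d:ℕ):ℝ) + d := by
        have h1 := Nat.div_add_mod n d
        have h2 := Nat.mod_lt n (show 0 < d by omega)
        have h3 : n < d * (n/d) + d := by omega
        exact_mod_cast h3
      have h5 : (n:ℝ)/d ≤ ((n/d:ℕ):ℝ) + 1 := by
        rw [div_le_iff₀ hdpos]; nlinarith
      have : (n:ℝ) * (Λ d / d) = Λ d * ((n:ℝ)/d) := by ring
      rw [this]
      nlinarith [vonMangoldt_nonneg (n := d)]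
  obtain ⟨k1, k2⟩ := key
  obtain ⟨t1, t2⟩ := Tlog_bounds n hn
  have hp := psi_le n
  have hnR : (1:ℝ) ≤ n := by exact_mod_cast hn
  have hlogn : Real.log n ≤ (n:ℝ) - 1 := Real.log_le_sub_one_of_pos (by linarith)
  have hlogpos : 0 ≤ Real.log n := Real.log_natCast_nonneg n
  rw [abs_le]
  constructor
  · nlinarith
  · nlinarith

noncomputable def bfun (d : ℕ) : ℝ := (Real.log d)⁻¹
noncomputable def wfun (d : ℕ) : ℝ :=
  MA d * (bfun d - bfun (d+1)) - (Real.log (Real.log (d+1)) - Real.log (Real.log d))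

lemma telescope (f : ℕ → ℝ) (m n : ℕ) (h : m ≤ n) :
    ∑ i ∈ Finset.Ico m n, (f (i+1) - f i) = f n - f m := by
  induction n, h using Nat.le_induction with
  | base => simp
  | succ n hmn ih => rw [Finset.sum_Ico_succ_top (by omega), ih]; ring

lemma abel (a b : ℕ → ℝ) (ha1 : a 1 = 0) (N : ℕ) (hN : 2 ≤ N) :
    ∑ d ∈ Finset.Icc 2 N, a d * b d =
      (∑ d ∈ Finset.Icc 1 N, a d) * b N +
        ∑ d ∈ Finset.Ico 2 N, (∑ e ∈ Finset.Icc 1 d, a e) * (b d - b (d+1)) := by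
  induction N, hN using Nat.le_induction with
  | base =>
    rw [show Finset.Icc 2 2 = {2} from rfl, show Finset.Icc 1 2 = {1, 2} from rfl]
    simp [ha1]
  | succ N hN ih =>
    rw [Finset.sum_Icc_succ_top (by omega : 2 ≤ N + 1),
      Finset.sum_Icc_succ_top (by omega : 1 ≤ N + 1),
      Finset.sum_Ico_succ_top (by omega : 2 ≤ N), ih]
    ring

lemma wfun_bound (d : ℕ) (hd : 2 ≤ d) :
    |wfun d| ≤ 9 * (bfun d - bfun (d+1)) +
      (1 / Real.log 2)^2 * (1 / (d:ℝ)^2) := by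
  have hd1 : (1:ℝ) < d := by exact_mod_cast hd
  have hdpos : (0:ℝ) < d := by linarith
  set L := Real.log d with hLdef
  have hcast : ((d+1:ℕ):ℝ) = (d:ℝ)+1 := by push_cast; ring
  set L' := Real.log ((d+1:ℕ):ℝ) with hL'def
  have hLpos : 0 < L := Real.log_pos hd1
  have hLL' : L ≤ L' := Real.log_le_log (by positivity) (by rw [hcast]; linarith)
  have hL'pos : 0 < L' := lt_of_lt_of_le hLpos hLL'
  have hlog2L : Real.log 2 ≤ L := Real.log_le_log (by norm_num) (by exact_mod_cast hd)
  have hlog2pos : (0:ℝ) < Real.log 2 := Real.log_pos (by norm_num)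
  have hs : L' - L ≤ 1/(d:ℝ) := by
    have h1 : L' - L = Real.log (((d:ℝ)+1)/d) := by
      rw [Real.log_div (by positivity) (by positivity), ← hcast]
    have h2 : Real.log (((d:ℝ)+1)/d) ≤ ((d:ℝ)+1)/d - 1 :=
      Real.log_le_sub_one_of_pos (by positivity)
    have h3 : ((d:ℝ)+1)/d - 1 = 1/d := by field_simp; ring
    linarith
  have hspos : 0 ≤ L' - L := by linarith
  have hmert := mertens1 d (by omega)
  have hbb : bfun d - bfun (d+1) = (L' - L)/(L*L') := by
    rw [bfun, bfun]
    rw [← hLdef, ← hL'def]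
    field_simp
  have hbbpos : 0 ≤ bfun d - bfun (d+1) := by
    rw [hbb]; positivity
  have claim1 : 1 - L/L' ≤ Real.log L' - Real.log L := by
    have h1 := Real.log_le_sub_one_of_pos (x := L/L') (by positivity)
    rw [Real.log_div hLpos.ne' hL'pos.ne'] at h1
    linarith
  have claim2 : Real.log L' - Real.log L ≤ L'/L - 1 := by
    have h1 := Real.log_le_sub_one_of_pos (x := L'/L) (by positivity)
    rw [Real.log_div hL'pos.ne' hLpos.ne'] at h1
    linarith
  have hwd : wfun d = (MA d - L) * (bfun d - bfun (d+1)) +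
      ((1 - L/L') - (Real.log L' - Real.log L)) := by
    rw [wfun, hbb]
    rw [show Real.log ((d:ℝ)+1) = L' from by rw [hL'def, hcast]]
    rw [← hLdef]
    field_simp
    ring
  have hB : (L'/L - 1) - (1 - L/L') ≤ (1/Real.log 2)^2 * (1/(d:ℝ)^2) := by
    have e1 : (L'/L - 1) - (1 - L/L') = (L'-L)^2/(L*L') := by field_simp
    have e2 : (L'-L)^2/(L*L') ≤ (L'-L)^2/(L*L) := by
      apply div_le_div_of_nonneg_left (by positivity) (by positivity)
      nlinarith
    have e3 : (L'-L)^2/(L*L) ≤ (1/(d:ℝ))^2/(Real.log 2 * Real.log 2) := by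
      apply div_le_div₀ (by positivity) (by nlinarith) (by positivity) (by nlinarith)
    have e4 : (1/(d:ℝ))^2/(Real.log 2 * Real.log 2) = (1/Real.log 2)^2 * (1/(d:ℝ)^2) := by
      field_simp
    linarith
  rw [abs_le]
  have habs := abs_le.mp hmert
  have hq : 0 ≤ (1/Real.log 2)^2 * (1/(d:ℝ)^2) := by positivity
  constructor
  · rw [hwd]
    linarith [mul_le_mul_of_nonneg_right habs.1 hbbpos, hB, claim1, claim2]
  · rw [hwd]
    linarith [mul_le_mul_of_nonneg_right habs.2 hbbpos, hB, claim1, claim2]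

lemma bfun_summable : Summable (fun k : ℕ => bfun (k+2) - bfun (k+3)) := by
  apply summable_of_sum_range_le (c := bfun 2)
  · intro k
    have h1 : ((k:ℝ)+2) ≤ ((k:ℝ)+3) := by linarith
    have : Real.log ((k+2:ℕ):ℝ) ≤ Real.log ((k+3:ℕ):ℝ) := by
      apply Real.log_le_log (by positivity)
      push_cast; linarith
    have hpos : 0 < Real.log ((k+2:ℕ):ℝ) := Real.log_pos (by push_cast; linarith)
    rw [bfun, bfun]
    simp only [sub_nonneg]
    apply inv_anti₀ hpos this
  · intro n
    have : ∑ i ∈ Finset.range n, (bfun (i+2) - bfun (i+3)) = bfun 2 - bfun (n+2) := by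
      have h2 : ∀ i, bfun (i+2) - bfun (i+3) = -((fun j => bfun (j+2)) (i+1) - (fun j => bfun (j+2)) i) := by
        intro i; simp only; ring_nf
      rw [Finset.sum_congr rfl (fun i _ => h2 i), Finset.sum_neg_distrib,
        show Finset.range n = Finset.Ico 0 n from by simp,
        telescope (fun j => bfun (j+2)) 0 n (Nat.zero_le n)]
      rw [neg_sub]
    rw [this]
    have h9 : 0 ≤ bfun (n+2) := by
      rw [bfun]
      exact inv_nonneg.mpr (Real.log_natCast_nonneg _)
    linarith

lemma inv_sq_summable : Summable (fun k : ℕ => 1/((k:ℝ)+2)^2) := by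
  have h := (Real.summable_one_div_nat_pow (p := 2)).mpr (by norm_num)
  have h2 := h.comp_injective (add_left_injective 2)
  refine h2.congr fun n => ?_
  simp [Function.comp]

lemma wfun_summable : Summable (fun k : ℕ => wfun (k+2)) := by
  rw [← summable_abs_iff]
  have hg : Summable (fun k : ℕ => 9 * (bfun (k+2) - bfun (k+3)) +
      (1/Real.log 2)^2 * (1/((k:ℝ)+2)^2)) :=
    (bfun_summable.mul_left 9).add (inv_sq_summable.mul_left _)
  refine Summable.of_nonneg_of_le (fun k => abs_nonneg _) (fun k => ?_) hg
  have hb := wfun_bound (k+2) (by omega)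
  have hc : ((k+2:ℕ):ℝ) = (k:ℝ)+2 := by push_cast; ring
  rw [hc] at hb
  exact hb

lemma MA_bfun_tendsto : Filter.Tendsto (fun n : ℕ => MA n * bfun n) atTop (nhds 1) := by
  have hlog : Filter.Tendsto (fun n : ℕ => Real.log n) atTop atTop :=
    Real.tendsto_log_atTop.comp tendsto_natCast_atTop_atTop
  have hinv : Filter.Tendsto (fun n : ℕ => (Real.log n)⁻¹) atTop (nhds 0) :=
    hlog.inv_tendsto_atTop
  have h9 : Filter.Tendsto (fun n : ℕ => 9 * |(Real.log n)⁻¹|) atTop (nhds 0) := by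
    have := (hinv.abs).const_mul (9:ℝ)
    simpa using this
  have h0 : Filter.Tendsto (fun n : ℕ => (MA n - Real.log n) * (Real.log n)⁻¹) atTop (nhds 0) := by
    apply squeeze_zero_norm' ?_ h9
    filter_upwards [eventually_ge_atTop 1] with n hn
    rw [norm_mul, Real.norm_eq_abs, Real.norm_eq_abs]
    have := mertens1 n hn
    have h2 : (0:ℝ) ≤ |(Real.log n)⁻¹| := abs_nonneg _
    nlinarith [abs_nonneg (MA n - Real.log n)]
  have key : ∀ᶠ n : ℕ in atTop, (MA n - Real.log n) * (Real.log n)⁻¹ + 1 = MA n * bfun n := by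
    filter_upwards [eventually_ge_atTop 2] with n hn
    have hpos : 0 < Real.log n := Real.log_pos (by exact_mod_cast hn)
    rw [bfun]
    field_simp; ring
  have := h0.add (tendsto_const_nhds (x := (1:ℝ)))
  rw [zero_add] at this
  exact Filter.Tendsto.congr' key this

lemma wsum_tendsto : Filter.Tendsto (fun n : ℕ => ∑ d ∈ Finset.Ico 2 n, wfun d) atTop
    (nhds (∑' k, wfun (k+2))) := by
  have h1 := wfun_summable.hasSum.tendsto_sum_nat
  have h2 := h1.comp (tendsto_sub_atTop_nat 2)
  refine h2.congr fun n => ?_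
  simp only [Function.comp]
  rw [Finset.sum_Ico_eq_sum_range]
  exact Finset.sum_congr rfl (fun k _ => by rw [Nat.add_comm 2 k])

lemma mertens2 : ∃ l : ℝ, Filter.Tendsto (fun n : ℕ =>
    (∑ d ∈ Finset.Icc 2 n, Λ d / (d * Real.log d)) - Real.log (Real.log n)) atTop (nhds l) := by
  refine ⟨1 - Real.log (Real.log 2) + ∑' k, wfun (k+2), ?_⟩
  have key : ∀ᶠ n : ℕ in atTop,
      MA n * bfun n - Real.log (Real.log 2) + ∑ d ∈ Finset.Ico 2 n, wfun d =
      (∑ d ∈ Finset.Icc 2 n, Λ d / (d * Real.log d)) - Real.log (Real.log n) := by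
    filter_upwards [eventually_ge_atTop 2] with n hn
    have habel := abel (fun d => Λ d / d) bfun (by simp) n hn
    have hL : ∑ d ∈ Finset.Icc 2 n, Λ d / (d * Real.log d) =
        ∑ d ∈ Finset.Icc 2 n, (Λ d / d) * bfun d := by
      refine Finset.sum_congr rfl (fun d _ => ?_)
      rw [bfun, div_mul_eq_div_div, div_eq_mul_inv]
    have hMA : ∀ d : ℕ, (∑ e ∈ Finset.Icc 1 d, Λ e / e) = MA d := fun d => rfl
    have hmid : ∑ d ∈ Finset.Ico 2 n, MA d * (bfun d - bfun (d+1)) =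
        (∑ d ∈ Finset.Ico 2 n, wfun d) +
          (Real.log (Real.log n) - Real.log (Real.log 2)) := by
      have hterm : ∀ d : ℕ, MA d * (bfun d - bfun (d+1)) =
          wfun d + ((fun j : ℕ => Real.log (Real.log j)) (d+1) -
            (fun j : ℕ => Real.log (Real.log j)) d) := by
        intro d
        rw [wfun]
        have : ((d+1:ℕ):ℝ) = (d:ℝ)+1 := by push_cast; ring
        simp only [this]
        ring
      rw [Finset.sum_congr rfl (fun d _ => hterm d), Finset.sum_add_distrib]
      have ht := telescope (fun j : ℕ => Real.log (Real.log j)) 2 n hn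
      rw [ht]
      norm_num
    rw [hL, habel]
    simp only [hMA]
    rw [hmid]
    ring
  have hten := (MA_bfun_tendsto.sub_const (Real.log (Real.log 2))).add wsum_tendsto
  exact Filter.Tendsto.congr' key hten

lemma sum_le_of_inj {s : Finset ℕ} {t : Finset (ℕ×ℕ)} (ι : ℕ → ℕ×ℕ) (f : ℕ → ℝ) (g : ℕ×ℕ → ℝ)
    (hinj : ∀ d ∈ s, ∀ d' ∈ s, ι d = ι d' → d = d')
    (hmap : ∀ d ∈ s, ι d ∈ t)
    (hfg : ∀ d ∈ s, f d ≤ g (ι d))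
    (hg : ∀ x ∈ t, 0 ≤ g x) :
    ∑ d ∈ s, f d ≤ ∑ x ∈ t, g x := by
  calc ∑ d ∈ s, f d ≤ ∑ d ∈ s, g (ι d) := Finset.sum_le_sum hfg
    _ = ∑ x ∈ s.image ι, g x := (Finset.sum_image hinj).symm
    _ ≤ ∑ x ∈ t, g x := by
        refine Finset.sum_le_sum_of_subset_of_nonneg ?_ (fun x hx _ => hg x hx)
        intro x hx
        obtain ⟨d, hd, rfl⟩ := Finset.mem_image.mp hx
        exact hmap d hd

lemma inv_sq_partial (M : ℕ) : ∑ i ∈ Finset.range M, 1/((i:ℝ))^2 ≤ 2 := by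
  have key : ∀ M : ℕ, 1 ≤ M → ∑ i ∈ Finset.range (M+1), 1/((i:ℝ))^2 ≤ 2 - 1/(M:ℝ) := by
    intro M hM
    induction M, hM using Nat.le_induction with
    | base =>
      rw [show (1:ℕ)+1 = 2 from rfl, Finset.sum_range_succ, Finset.sum_range_one]
      norm_num
    | succ M hM ih =>
      rw [Finset.sum_range_succ]
      have hMR : (1:ℝ) ≤ M := by exact_mod_cast hM
      have h1 : 1/((M:ℝ)+1)^2 ≤ 1/(M:ℝ) - 1/((M:ℝ)+1) := by
        rw [div_sub_div _ _ (by linarith) (by linarith)]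
        apply div_le_div₀ (by linarith) (by linarith) (by nlinarith) (by nlinarith)
      have h2 : ((M+1:ℕ):ℝ) = (M:ℝ)+1 := by push_cast; ring
      rw [h2]
      linarith
  rcases Nat.eq_zero_or_pos M with h | h
  · simp [h]
  · obtain ⟨M', rfl⟩ : ∃ M', M = M' + 1 := ⟨M - 1, by omega⟩
    rcases Nat.eq_zero_or_pos M' with h' | h'
    · simp [h']
    have := key M' h'
    have hM'R : (1:ℝ) ≤ M' := by exact_mod_cast h'
    have : (0:ℝ) < 1/M' := by positivity
    linarith [key M' h']

lemma geom_partial (M : ℕ) : ∑ k ∈ Finset.range M, 4*(1/2:ℝ)^k ≤ 8 := by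
  have h := geom_sum_eq (by norm_num : (1/2:ℝ) ≠ 1) M
  have hpow : (0:ℝ) ≤ (1/2:ℝ)^M := by positivity
  calc ∑ k ∈ Finset.range M, 4*(1/2:ℝ)^k = 4 * ∑ k ∈ Finset.range M, (1/2:ℝ)^k := by
        rw [Finset.mul_sum]
    _ = 4 * (((1/2:ℝ)^M - 1)/((1/2:ℝ) - 1)) := by rw [h]
    _ = 8 - 8 * (1/2:ℝ)^M := by field_simp; ring
    _ ≤ 8 := by linarith

noncomputable def Dfun (n : ℕ) : ℝ :=
  ∑ d ∈ Finset.Icc 2 n, (if d.Prime then 0 else Λ d / (d * Real.log d))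

lemma Dfun_term_nonneg (d : ℕ) :
    0 ≤ (if d.Prime then 0 else Λ d / (d * Real.log d)) := by
  split
  · exact le_refl 0
  · apply div_nonneg vonMangoldt_nonneg
    apply mul_nonneg (Nat.cast_nonneg d) (Real.log_natCast_nonneg d)

lemma Dfun_bounded (n : ℕ) : Dfun n ≤ 16 := by
  rw [Dfun]
  set s := (Finset.Icc 2 n).filter (fun d => ¬ d.Prime ∧ Λ d ≠ 0) with hs
  have hsub : ∑ d ∈ Finset.Icc 2 n, (if d.Prime then 0 else Λ d / (d * Real.log d)) =
      ∑ d ∈ s, Λ d / (d * Real.log d) := by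
    rw [hs, Finset.sum_filter]
    refine Finset.sum_congr rfl (fun d _ => ?_)
    rcases eq_or_ne (Λ d) 0 with h0 | h0
    · simp [h0]
    · simp [h0]
  rw [hsub]
  have key : ∑ d ∈ s, Λ d / (d * Real.log d) ≤
      ∑ x ∈ Finset.range (n+1) ×ˢ Finset.range (n+1), (1/((x.1:ℝ))^2) * (4*(1/2:ℝ)^x.2) := by
    apply sum_le_of_inj (fun d => (d.minFac, d.factorization d.minFac))
    · -- injectivity
      intro d hd d' hd' heq
      rw [hs, Finset.mem_filter] at hd hd'
      obtain ⟨p, k, hp, hk, rfl⟩ := vonMangoldt_ne_zero_iff.mp hd.2.2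
      obtain ⟨p', k', hp', hk', rfl⟩ := vonMangoldt_ne_zero_iff.mp hd'.2.2
      rw [Prod.mk.injEq] at heq
      rw [(hp.nat_prime).pow_minFac hk.ne', (hp'.nat_prime).pow_minFac hk'.ne'] at heq
      obtain ⟨h1, h2⟩ := heq
      subst h1
      rw [hp.nat_prime.factorization_pow, hp.nat_prime.factorization_pow] at h2
      simp at h2
      rw [h2]
    · -- maps into product
      intro d hd
      rw [hs, Finset.mem_filter, Finset.mem_Icc] at hd
      obtain ⟨⟨hd2, hdn⟩, hnp, hΛ⟩ := hd
      obtain ⟨p, k, hp, hk, rfl⟩ := vonMangoldt_ne_zero_iff.mp hΛ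
      rw [Finset.mem_product, Finset.mem_range, Finset.mem_range,
        (hp.nat_prime).pow_minFac hk.ne', hp.nat_prime.factorization_pow]
      simp only [Finsupp.single_eq_same]
      constructor
      · have : p ≤ p ^ k := Nat.le_self_pow hk.ne' p
        omega
      · have h1 : k < 2 ^ k := Nat.lt_two_pow_self
        have h2 : 2 ^ k ≤ p ^ k := Nat.pow_le_pow_left hp.nat_prime.two_le k
        omega
    · -- value bound
      intro d hd
      rw [hs, Finset.mem_filter, Finset.mem_Icc] at hd
      obtain ⟨⟨hd2, hdn⟩, hnp, hΛ⟩ := hd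
      obtain ⟨p, k, hp, hk, rfl⟩ := vonMangoldt_ne_zero_iff.mp hΛ
      have hpp := hp.nat_prime
      rw [(hpp).pow_minFac hk.ne', hpp.factorization_pow]
      simp only [Finsupp.single_eq_same]
      have hk2 : 2 ≤ k := by
        rcases Nat.lt_or_ge k 2 with h | h
        · interval_cases k
          · rw [pow_one] at hnp; exact absurd hpp hnp
        · exact h
      -- Λ (p^k) = log p
      have hval : Λ (p ^ k) = Real.log p := by
        rw [vonMangoldt_apply_pow hk.ne', vonMangoldt_apply_prime hpp]
      have hcast : ((p ^ k : ℕ) : ℝ) = (p:ℝ)^k := by push_cast; ring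
      have hlogpk : Real.log ((p^k : ℕ) : ℝ) = k * Real.log p := by
        rw [hcast, Real.log_pow]
      have hppos : (2:ℝ) ≤ (p:ℝ) := by exact_mod_cast hpp.two_le
      have hlogp : 0 < Real.log p := Real.log_pos (by linarith)
      have hkR : (2:ℝ) ≤ (k:ℝ) := by exact_mod_cast hk2
      rw [hval, hlogpk, hcast]
      have hpk_pos : (0:ℝ) < (p:ℝ)^k := by positivity
      have e1 : Real.log p / ((p:ℝ)^k * ((k:ℝ) * Real.log p)) = 1/((k:ℝ) * (p:ℝ)^k) := by
        field_simp
      rw [e1]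
      -- 1/(k p^k) ≤ 1/p^k ≤ 4/(p^2 2^k)
      have step1 : 1/((k:ℝ) * (p:ℝ)^k) ≤ 1/(p:ℝ)^k := by
        apply div_le_div_of_nonneg_left (by norm_num) hpk_pos
        nlinarith
      have hnat : (p:ℕ)^2 * 2^k ≤ 4 * p^k := by
        have d1 : p^k = p^2 * p^(k-2) := by
          rw [← pow_add]; congr 1; omega
        have d2 : (2:ℕ)^k = 4 * 2^(k-2) := by
          rw [show (4:ℕ) = 2^2 from rfl, ← pow_add]; congr 1; omega
        have d3 : (2:ℕ)^(k-2) ≤ p^(k-2) := Nat.pow_le_pow_left hpp.two_le _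
        calc p^2 * 2^k = 4 * (p^2 * 2^(k-2)) := by rw [d2]; ring
          _ ≤ 4 * (p^2 * p^(k-2)) := by
              apply Nat.mul_le_mul_left
              exact Nat.mul_le_mul_left _ d3
          _ = 4 * p^k := by rw [← d1]
      have hnatR : ((p:ℝ))^2 * (2:ℝ)^k ≤ 4 * (p:ℝ)^k := by exact_mod_cast hnat
      have step2 : 1/(p:ℝ)^k ≤ 4/(((p:ℝ))^2 * 2^k) := by
        rw [div_le_div_iff₀ hpk_pos (by positivity)]
        linarith
      have e2 : (1/((p:ℝ))^2) * (4*(1/2:ℝ)^k) = 4/(((p:ℝ))^2 * 2^k) := by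
        rw [div_pow, one_pow]
        field_simp
      linarith
    · intro x _
      positivity
  calc ∑ d ∈ s, Λ d / (d * Real.log d) ≤ _ := key
    _ = (∑ i ∈ Finset.range (n+1), 1/((i:ℝ))^2) * (∑ k ∈ Finset.range (n+1), 4*(1/2:ℝ)^k) := by
        rw [Finset.sum_mul_sum]
        rw [Finset.sum_product]
    _ ≤ 2 * 8 := by
        apply mul_le_mul (inv_sq_partial _) (geom_partial _) ?_ (by norm_num)
        apply Finset.sum_nonneg; intro k _; positivity
    _ = 16 := by norm_num

lemma Dfun_mono : Monotone Dfun := by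
  intro n m hnm
  apply Finset.sum_le_sum_of_subset_of_nonneg (Finset.Icc_subset_Icc le_rfl hnm)
  intro d _ _
  exact Dfun_term_nonneg d

lemma Dfun_tendsto : ∃ l : ℝ, Filter.Tendsto Dfun atTop (nhds l) := by
  refine ⟨⨆ n, Dfun n, tendsto_atTop_ciSup Dfun_mono ?_⟩
  exact ⟨16, by rintro x ⟨n, rfl⟩; exact Dfun_bounded n⟩

lemma primesum : ∃ M : ℝ, Filter.Tendsto (fun n : ℕ =>
    (∑ d ∈ Finset.Icc 2 n, (if d.Prime then 1/(d:ℝ) else 0)) - Real.log (Real.log n))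
    atTop (nhds M) := by
  obtain ⟨l1, h1⟩ := mertens2
  obtain ⟨l2, h2⟩ := Dfun_tendsto
  refine ⟨l1 - l2, ?_⟩
  have key : ∀ n : ℕ,
      (∑ d ∈ Finset.Icc 2 n, (if d.Prime then 1/(d:ℝ) else 0)) - Real.log (Real.log n) =
      ((∑ d ∈ Finset.Icc 2 n, Λ d / (d * Real.log d)) - Real.log (Real.log n)) - Dfun n := by
    intro n
    have hpt : ∀ d ∈ Finset.Icc 2 n, (if d.Prime then 1/(d:ℝ) else 0) =
        Λ d / (d * Real.log d) - (if d.Prime then 0 else Λ d / (d * Real.log d)) := by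
      intro d hd
      simp only [Finset.mem_Icc] at hd
      split_ifs with h
      · rw [vonMangoldt_apply_prime h]
        have h1 : (1:ℝ) < d := by exact_mod_cast hd.1
        have hlog : 0 < Real.log d := Real.log_pos h1
        field_simp; ring
      · ring
    rw [Finset.sum_congr rfl hpt, Finset.sum_sub_distrib, Dfun]
    ring
  simp_rw [key]
  exact h1.sub h2

-- conversion: filter prime over range N to Icc 2 (N-1) if-sums
lemma filter_prime_sum (f : ℕ → ℝ) (N : ℕ) :
    ∑ p ∈ (Finset.range N).filter Nat.Prime, f p =
      ∑ d ∈ Finset.Icc 2 (N-1), (if d.Prime then f d else 0) := by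
  rw [Finset.sum_filter]
  apply (Finset.sum_subset ?_ ?_).symm
  · intro d hd
    simp only [Finset.mem_Icc] at hd
    simp only [Finset.mem_range]
    omega
  · intro x hx hnx
    simp only [Finset.mem_range] at hx
    simp only [Finset.mem_Icc] at hnx
    have : x < 2 := by omega
    interval_cases x <;> norm_num

lemma logest {x : ℝ} (h0 : 0 ≤ x) (h2 : x ≤ 1/2) : |x + Real.log (1 - x)| ≤ 2*x^2 := by
  have habs : |x| < 1 := by rw [abs_of_nonneg h0]; linarith
  have := Real.abs_log_sub_add_sum_range_le habs 1
  simp only [Finset.sum_range_one, pow_one, Nat.cast_zero, zero_add, div_one] at this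
  rw [abs_of_nonneg h0] at this
  norm_num at this
  have h3 : x^2 / (1 - x) ≤ 2*x^2 := by
    rw [div_le_iff₀ (by linarith)]
    nlinarith [sq_nonneg x, mul_nonneg (sq_nonneg x) (by linarith : (0:ℝ) ≤ 1 - 2*x)]
  linarith

theorem stmt19 (g : ℕ → ℝ) (C e : ℝ)
    (hnonneg : ∀ p : ℕ, p.Prime → 0 ≤ g p)
    (hlt : ∀ p : ℕ, p.Prime → g p < 1)
    (hbd : ∀ p : ℕ, p.Prime → g p ≤ C / p)
    (hmertens : ∃ C' : ℝ, ∀ y : ℝ, 3 ≤ y →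
      |(∑ p ∈ (Finset.range (⌊y⌋₊ + 1)).filter Nat.Prime, g p) -
        (Real.log (Real.log y) + e)| ≤ C' * (Real.log y) ^ (-(10 : ℝ))) :
    ∃ H : ℝ, 0 < H ∧
      Tendsto
        (fun N : ℕ => ∏ p ∈ (Finset.range N).filter Nat.Prime,
          (1 - g p) * (1 - 1 / (p : ℝ))⁻¹)
        atTop (nhds H) := by
  obtain ⟨Mc, hMc⟩ := primesum
  obtain ⟨C', hC'⟩ := hmertens
  have hC0 : 0 ≤ C := by
    have h1 := hnonneg 2 Nat.prime_two
    have h2 := hbd 2 Nat.prime_two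
    have : (0:ℝ) ≤ C / 2 := le_trans h1 h2
    linarith
  -- φ function
  set φ : ℕ → ℝ := fun d => if d.Prime then
    (Real.log (1 - g d) - Real.log (1 - 1/(d:ℝ)) + (g d - 1/(d:ℝ))) else 0 with hφ
  -- facts about primes
  have hfact : ∀ p : ℕ, p.Prime → 0 < 1 - g p ∧ 0 < 1 - 1/(p:ℝ) := by
    intro p hp
    have h2 : (2:ℝ) ≤ p := by exact_mod_cast hp.two_le
    constructor
    · linarith [hlt p hp]
    · have : 1/(p:ℝ) ≤ 1/2 := by
        apply div_le_div_of_nonneg_left (by norm_num) (by norm_num) (by linarith)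
      linarith
  -- summability of φ
  have hsummable : Summable φ := by
    have hbase : Summable (fun d : ℕ => (2*C^2+2) * (1/(d:ℝ)^2)) :=
      (((Real.summable_one_div_nat_pow (p := 2)).mpr (by norm_num))).mul_left _
    apply Summable.of_norm_bounded_eventually_nat hbase
    filter_upwards [eventually_ge_atTop (max 2 (⌈2*C⌉₊ + 1))] with d hd
    rw [hφ]
    by_cases hp : d.Prime
    · simp only [hp, if_true]
      have hd2 : (2:ℝ) ≤ d := by
        have : 2 ≤ d := le_trans (le_max_left _ _) hd
        exact_mod_cast this
      have hdC : 2*C ≤ (d:ℝ) := by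
        have h1 : (⌈2*C⌉₊ :ℕ) + 1 ≤ d := le_trans (le_max_right _ _) hd
        have h2 : (2*C) ≤ (⌈2*C⌉₊:ℝ) := Nat.le_ceil _
        have h3 : ((⌈2*C⌉₊:ℕ):ℝ) + 1 ≤ (d:ℝ) := by exact_mod_cast h1
        linarith
      set x := g d with hx
      set y := 1/(d:ℝ) with hy
      have hx0 : 0 ≤ x := hnonneg d hp
      have hxC : x ≤ C/d := hbd d hp
      have hx2 : x ≤ 1/2 := by
        have : C/(d:ℝ) ≤ 1/2 := by
          rw [div_le_div_iff₀ (by linarith) (by norm_num)]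
          linarith
        linarith
      have hy0 : 0 ≤ y := by rw [hy]; positivity
      have hy2 : y ≤ 1/2 := by
        rw [hy, div_le_div_iff₀ (by linarith) (by norm_num)]
        linarith
      have e1 := logest hx0 hx2
      have e2 := logest hy0 hy2
      have hid : Real.log (1 - x) - Real.log (1 - y) + (x - y) =
          (x + Real.log (1 - x)) - (y + Real.log (1 - y)) := by ring
      rw [Real.norm_eq_abs, hid]
      have habs := abs_sub (x + Real.log (1-x)) (y + Real.log (1-y))
      have hxsq : x^2 ≤ C^2/(d:ℝ)^2 := by
        have : x^2 ≤ (C/d)^2 := by nlinarith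
        rw [div_pow] at this
        exact this
      have hysq : y^2 = 1/(d:ℝ)^2 := by rw [hy, div_pow, one_pow]
      have hCd : C^2/(d:ℝ)^2 = C^2 * (1/(d:ℝ)^2) := by ring
      calc |(x + Real.log (1-x)) - (y + Real.log (1-y))|
          ≤ |x + Real.log (1-x)| + |y + Real.log (1-y)| := abs_sub _ _
        _ ≤ 2*x^2 + 2*y^2 := by linarith
        _ ≤ (2*C^2+2) * (1/(d:ℝ)^2) := by
            rw [hCd] at hxsq
            have : (0:ℝ) < (d:ℝ)^2 := by positivity
            have h9 : (0:ℝ) ≤ 1/(d:ℝ)^2 := by positivity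
            nlinarith
    · simp only [hp, if_false]
      have : (0:ℝ) ≤ (2*C^2+2) * (1/(d:ℝ)^2) := by positivity
      simpa using this
  -- partial sums of φ converge
  have hΦ : Tendsto (fun N : ℕ => ∑ d ∈ Finset.range N, φ d) atTop (nhds (∑' d, φ d)) :=
    hsummable.hasSum.tendsto_sum_nat
  -- positivity of partial products
  have hPpos : ∀ N : ℕ, 0 < ∏ p ∈ (Finset.range N).filter Nat.Prime,
      (1 - g p) * (1 - 1/(p:ℝ))⁻¹ := by
    intro N
    apply Finset.prod_pos
    intro p hp
    rw [Finset.mem_filter] at hp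
    obtain ⟨h1, h2⟩ := hfact p hp.2
    exact mul_pos h1 (inv_pos.mpr h2)
  -- log of partial product
  have hkey : ∀ N : ℕ, Real.log (∏ p ∈ (Finset.range N).filter Nat.Prime,
      (1 - g p) * (1 - 1/(p:ℝ))⁻¹) =
      (∑ d ∈ Finset.range N, φ d) +
        (∑ p ∈ (Finset.range N).filter Nat.Prime, 1/(p:ℝ)) -
        (∑ p ∈ (Finset.range N).filter Nat.Prime, g p) := by
    intro N
    rw [Real.log_prod]
    · have hterm : ∀ p ∈ (Finset.range N).filter Nat.Prime,
          Real.log ((1 - g p) * (1 - 1/(p:ℝ))⁻¹) =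
            φ p + 1/(p:ℝ) - g p := by
        intro p hp
        rw [Finset.mem_filter] at hp
        obtain ⟨h1, h2⟩ := hfact p hp.2
        rw [Real.log_mul h1.ne' (inv_ne_zero h2.ne'), Real.log_inv, hφ]
        simp only [hp.2, if_true]
        ring
      rw [Finset.sum_congr rfl hterm]
      have : ∑ d ∈ Finset.range N, φ d = ∑ p ∈ (Finset.range N).filter Nat.Prime, φ p := by
        rw [Finset.sum_filter]
        refine Finset.sum_congr rfl (fun d _ => ?_)
        rw [hφ]
        by_cases h : d.Prime <;> simp [h]
      rw [this, ← Finset.sum_add_distrib, ← Finset.sum_sub_distrib]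
    · intro p hp
      rw [Finset.mem_filter] at hp
      obtain ⟨h1, h2⟩ := hfact p hp.2
      exact (mul_pos h1 (inv_pos.mpr h2)).ne'
  -- prime reciprocal sums tendsto
  have hPS : Tendsto (fun N : ℕ => (∑ p ∈ (Finset.range N).filter Nat.Prime, 1/(p:ℝ)) -
      Real.log (Real.log ((N-1:ℕ)))) atTop (nhds Mc) := by
    have h1 := hMc.comp (tendsto_sub_atTop_nat 1)
    refine h1.congr (fun N => ?_)
    simp only [Function.comp]
    rw [filter_prime_sum (fun p => 1/(p:ℝ)) N]
  -- error term from hmertens tendsto 0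
  have herr : Tendsto (fun N : ℕ => (∑ p ∈ (Finset.range N).filter Nat.Prime, g p) -
      Real.log (Real.log ((N-1:ℕ))) - e) atTop (nhds 0) := by
    have hb : Tendsto (fun N : ℕ => C' * (Real.log ((N-1:ℕ))) ^ (-(10:ℝ))) atTop (nhds 0) := by
      have h1 : Tendsto (fun N : ℕ => Real.log ((N-1:ℕ))) atTop atTop :=
        (Real.tendsto_log_atTop.comp tendsto_natCast_atTop_atTop).comp (tendsto_sub_atTop_nat 1)
      have h2 := (tendsto_rpow_neg_atTop (by norm_num : (0:ℝ) < 10)).comp h1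
      have h3 := h2.const_mul C'
      simpa using h3
    apply squeeze_zero_norm' ?_ hb
    filter_upwards [eventually_ge_atTop 4] with N hN
    have hy : (3:ℝ) ≤ ((N-1:ℕ):ℝ) := by
      have : (3:ℕ) ≤ N - 1 := by omega
      exact_mod_cast this
    have := hC' ((N-1:ℕ):ℝ) hy
    rw [Nat.floor_natCast] at this
    rw [show N - 1 + 1 = N from by omega] at this
    rw [Real.norm_eq_abs, sub_sub]
    exact this
  -- combine
  set L := (∑' d, φ d) + Mc - e with hL
  refine ⟨Real.exp L, Real.exp_pos L, ?_⟩
  have hlogP : Tendsto (fun N : ℕ => Real.log (∏ p ∈ (Finset.range N).filter Nat.Prime,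
      (1 - g p) * (1 - 1/(p:ℝ))⁻¹)) atTop (nhds L) := by
    have hcomb := (hΦ.add hPS).sub (herr.add (tendsto_const_nhds (x := e)))
    rw [show (∑' d, φ d) + Mc - (0 + e) = L from by rw [hL]; ring] at hcomb
    refine hcomb.congr (fun N => ?_)
    rw [hkey N]
    ring
  have hexp := (Real.continuous_exp.tendsto L).comp hlogP
  refine hexp.congr (fun N => ?_)
  simp only [Function.comp]
  exact Real.exp_log (hPpos N)
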